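/- Let m be a nonzero ideal of the ring of integers O of a number field K. Then |(O/m)ˣ| / |O/m| = ∏_{p | m} (1 - 1/N(p)), the product taken over the distinct prime ideal divisors p of m; equivalently, as rational numbers, Nat.card ((O/m)ˣ) = N(m) · ∏_{p | m} (1 - 1/N(p)). -/

import Mathlib

set_option maxHeartbeats 1000000
set_option synthInstance.maxHeartbeats 400000


open NumberField

/-- Units of a pi type. -/
def myPiUnits {ι : Type*} (M : ι → Type*) [∀ i, Monoid (M i)] :
    (∀ i, M i)ˣ ≃* ∀ i, (M i)ˣ where
  toFun u i := ⟨u.val i, u.inv i, congrFun u.val_inv i, congrFun u.inv_val i⟩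
  invFun f := ⟨fun i => f i, fun i => ((f i)⁻¹ : (M i)ˣ),
    funext fun i => (f i).val_inv, funext fun i => (f i).inv_val⟩
  left_inv u := by ext; rfl
  right_inv f := by ext; rfl
  map_mul' u v := by ext; rfl

lemma myCardUnits {M : Type*} [Monoid M] :
    Nat.card Mˣ = Nat.card {y : M // IsUnit y} :=
  Nat.card_congr
    ⟨fun u => ⟨u, u.isUnit⟩, fun y => y.2.unit,
     fun u => Units.ext (by simp), fun y => Subtype.ext (by simp)⟩

section Aux

variable {R : Type*} [CommRing R] [IsDedekindDomain R]

lemma my_isUnit_mk_iff (P : Ideal R) [hPm : P.IsMaximal] {e : ℕ} (he : e ≠ 0) (x : R) :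
    IsUnit (Ideal.Quotient.mk (P ^ e) x) ↔ x ∉ P := by
  constructor
  · intro h hx
    obtain ⟨b, hb⟩ := h.exists_right_inv
    obtain ⟨y, rfl⟩ := Ideal.Quotient.mk_surjective b
    rw [← map_one (Ideal.Quotient.mk (P ^ e)), ← map_mul, Ideal.Quotient.mk_eq_mk_iff_sub_mem]
      at hb
    have h1 : x * y - 1 ∈ P := Ideal.pow_le_self he hb
    have : (1 : R) ∈ P := by
      have := P.sub_mem (P.mul_mem_right y hx) h1
      simpa using this
    exact hPm.ne_top (P.eq_top_iff_one.mpr this)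
  · intro hx
    have hsup : Ideal.span {x} ⊔ P = ⊤ := by
      rcases hPm.exists_inv hx with ⟨y, i, hi, hyi⟩
      rw [Ideal.eq_top_iff_one]
      have hxy : y * x ∈ Ideal.span {x} := Ideal.mem_span_singleton.mpr ⟨y, mul_comm y x⟩
      rw [← hyi]
      exact Submodule.add_mem_sup hxy hi
    have hcop : IsCoprime (Ideal.span {x}) (P ^ e) :=
      (Ideal.isCoprime_iff_sup_eq.mpr hsup).pow_right
    have hsup' : Ideal.span {x} ⊔ P ^ e = ⊤ := Ideal.isCoprime_iff_sup_eq.mp hcop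
    have h1 : (1 : R) ∈ Ideal.span {x} ⊔ P ^ e := hsup' ▸ Submodule.mem_top
    rcases Submodule.mem_sup.mp h1 with ⟨a, ha, b, hb, hab⟩
    rcases Ideal.mem_span_singleton.mp ha with ⟨c, rfl⟩
    refine IsUnit.of_mul_eq_one (Ideal.Quotient.mk (P ^ e) c) ?_
    rw [← map_mul, ← map_one (Ideal.Quotient.mk (P ^ e)),
      Ideal.Quotient.mk_eq_mk_iff_sub_mem]
    have : x * c - 1 = -b := by rw [← hab]; ring
    rw [this]
    exact (P ^ e).neg_mem hb

end Aux

section AuxO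

variable {K : Type*} [Field K] [NumberField K]

lemma my_card_units_quot_pow (P : Ideal (RingOfIntegers K)) (hP : P.IsPrime) (hP0 : P ≠ ⊥)
    {e : ℕ} (he : e ≠ 0) :
    Nat.card ((RingOfIntegers K ⧸ P ^ e)ˣ) =
      Ideal.absNorm P ^ e - Ideal.absNorm P ^ (e - 1) := by
  haveI hPm : P.IsMaximal := hP.isMaximal hP0
  set O := RingOfIntegers K
  have hq : Ideal.absNorm P ≠ 0 := by
    simpa [Ideal.absNorm_eq_zero_iff] using hP0
  have hcardPE : Nat.card (O ⧸ P ^ e) = Ideal.absNorm P ^ e := by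
    rw [← map_pow, Ideal.absNorm_apply, Submodule.cardQuot_apply]
  haveI : Finite (O ⧸ P ^ e) := by
    refine (Ideal.absNorm_ne_zero_iff (P ^ e)).mp ?_
    rw [map_pow]; exact pow_ne_zero _ hq
  haveI : Fintype (O ⧸ P ^ e) := Fintype.ofFinite _
  classical
  set J : Ideal (O ⧸ P ^ e) := P.map (Ideal.Quotient.mk (P ^ e)) with hJ
  -- units are the complement of J
  have hunit : ∀ y : O ⧸ P ^ e, IsUnit y ↔ y ∉ (J : Set (O ⧸ P ^ e)) := by
    intro y
    obtain ⟨x, rfl⟩ := Ideal.Quotient.mk_surjective y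
    rw [my_isUnit_mk_iff P he x]
    have : Ideal.Quotient.mk (P ^ e) x ∈ J ↔ x ∈ P ⊔ P ^ e :=
      Ideal.mem_quotient_iff_mem_sup
    rw [SetLike.mem_coe, this, sup_eq_left.mpr (Ideal.pow_le_self he)]
  -- card of J
  have hquot : Nat.card ((O ⧸ P ^ e) ⧸ J) = Ideal.absNorm P := by
    rw [Nat.card_congr (DoubleQuot.quotQuotEquivQuotOfLE (Ideal.pow_le_self he)).toEquiv,
      Ideal.absNorm_apply, Submodule.cardQuot_apply]
  have hJcard : Nat.card J = Ideal.absNorm P ^ (e - 1) := by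
    have h := AddSubgroup.card_eq_card_quotient_mul_card_addSubgroup
      (J.toAddSubgroup : AddSubgroup (O ⧸ P ^ e))
    have hqq : Nat.card ((O ⧸ P ^ e) ⧸ J.toAddSubgroup) = Nat.card ((O ⧸ P ^ e) ⧸ J) := rfl
    rw [hqq, hquot, hcardPE] at h
    have hJadd : Nat.card J.toAddSubgroup = Nat.card J := rfl
    rw [hJadd] at h
    have : Ideal.absNorm P * Ideal.absNorm P ^ (e - 1) =
        Ideal.absNorm P * Nat.card J := by
      rw [← h, ← pow_succ']
      congr 1
      omega
    exact (Nat.eq_of_mul_eq_mul_left (Nat.pos_of_ne_zero hq) this).symm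
  -- count units
  rw [myCardUnits]
  have hset : {y : O ⧸ P ^ e | IsUnit y} = (J : Set (O ⧸ P ^ e))ᶜ := by
    ext y; exact hunit y
  have : Nat.card {y : O ⧸ P ^ e // IsUnit y} =
      Nat.card ((J : Set (O ⧸ P ^ e))ᶜ : Set (O ⧸ P ^ e)) := by
    exact Nat.card_congr (Equiv.setCongr hset)
  have hJc2 : Nat.card ((J : Set (O ⧸ P ^ e)) : Type _) = Ideal.absNorm P ^ (e - 1) := hJcard
  rw [this, Nat.card_eq_fintype_card, Fintype.card_compl_set, ← Nat.card_eq_fintype_card,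
    ← Nat.card_eq_fintype_card, hcardPE, hJc2]

end AuxO

theorem stmt_13 (K : Type*) [Field K] [NumberField K]
    (m : Ideal (RingOfIntegers K)) (hm : m ≠ ⊥) :
    (Nat.card ((RingOfIntegers K ⧸ m)ˣ) : ℚ) =
      (Ideal.absNorm m : ℚ) *
        ∏ᶠ p ∈ {p : Ideal (RingOfIntegers K) | p.IsPrime ∧ p ∣ m},
          (1 - 1 / (Ideal.absNorm p : ℚ)) := by
  classical
  set O := RingOfIntegers K
  set s : Finset (Ideal O) := (UniqueFactorizationMonoid.factors m).toFinset with hs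
  have hfac := UniqueFactorizationMonoid.factors_eq_normalizedFactors m
  -- the set of prime divisors is s
  have hset : {p : Ideal O | p.IsPrime ∧ p ∣ m} = ↑s := by
    ext p
    simp only [Set.mem_setOf_eq, hs, Finset.coe_sort_coe, Finset.mem_coe,
      Multiset.mem_toFinset, hfac]
    rw [Ideal.mem_normalizedFactors_iff hm, Ideal.dvd_iff_le]
  rw [hset, finprod_mem_coe_finset]
  -- CRT
  have hequiv := IsDedekindDomain.quotientEquivPiFactors (R := O) hm
  have hcard : Nat.card ((O ⧸ m)ˣ) =
      ∏ P : s, Nat.card ((O ⧸ (P : Ideal O) ^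
        (Multiset.count (P : Ideal O) (UniqueFactorizationMonoid.factors m)))ˣ) := by
    rw [Nat.card_congr ((Units.mapEquiv hequiv.toMulEquiv).trans (myPiUnits _)).toEquiv,
      Nat.card_pi]
  -- basic facts about factors
  have hmem : ∀ P ∈ s, (P : Ideal O).IsPrime ∧ P ≠ ⊥ ∧
      Multiset.count P (UniqueFactorizationMonoid.factors m) ≠ 0 := by
    intro P hP
    rw [hs, Multiset.mem_toFinset] at hP
    have hprime : Prime P := UniqueFactorizationMonoid.prime_of_factor _ hP
    exact ⟨Ideal.isPrime_of_prime hprime, hprime.ne_zero,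
      fun h => (Multiset.count_eq_zero.mp h) hP⟩
  -- the per-factor formula over ℚ
  set e : Ideal O → ℕ := fun P => Multiset.count P (UniqueFactorizationMonoid.factors m) with he
  have hnorm : ∀ P ∈ s, (Ideal.absNorm P : ℚ) ≠ 0 := by
    intro P hP
    obtain ⟨h1, h2, h3⟩ := hmem P hP
    have : Ideal.absNorm P ≠ 0 := fun h => h2 (Ideal.absNorm_eq_zero_iff.mp h)
    exact_mod_cast this
  have hfactor : ∀ P ∈ s,
      (Nat.card ((O ⧸ P ^ e P)ˣ) : ℚ) =
        (Ideal.absNorm (P ^ e P) : ℚ) * (1 - 1 / (Ideal.absNorm P : ℚ)) := by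
    intro P hP
    obtain ⟨h1, h2, h3⟩ := hmem P hP
    rw [my_card_units_quot_pow P h1 h2 h3]
    have hle : Ideal.absNorm P ^ (e P - 1) ≤ Ideal.absNorm P ^ e P :=
      Nat.pow_le_pow_right (Nat.pos_of_ne_zero fun h =>
        h2 (Ideal.absNorm_eq_zero_iff.mp h)) (Nat.sub_le _ _)
    rw [Nat.cast_sub hle, map_pow, Nat.cast_pow, Nat.cast_pow]
    have hq := hnorm P hP
    have hstep : (Ideal.absNorm P : ℚ) ^ (e P - 1) =
        (Ideal.absNorm P : ℚ) ^ e P / (Ideal.absNorm P : ℚ) := by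
      rw [eq_div_iff hq, ← pow_succ, Nat.sub_add_cancel (Nat.one_le_iff_ne_zero.mpr h3)]
    rw [hstep]
    field_simp
  -- absNorm m as a product
  have hmprod : (Ideal.absNorm m : ℚ) = ∏ P ∈ s, (Ideal.absNorm (P ^ e P) : ℚ) := by
    have hprod : m = ∏ P ∈ s, P ^ e P := by
      conv_lhs => rw [← associated_iff_eq.mp (UniqueFactorizationMonoid.factors_prod hm)]
      rw [hs, Finset.prod_multiset_count]
    rw [hprod, map_prod, Nat.cast_prod]
  -- put it together
  rw [hcard, Nat.cast_prod, Finset.prod_coe_sort s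
    (fun P => (Nat.card ((O ⧸ P ^ e P)ˣ) : ℚ)), hmprod, ← Finset.prod_mul_distrib]
  exact Finset.prod_congr rfl hfactor
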